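/- Let (T,X) be a surjective semiflow with continuous preimage maps, and x₀ ∈ X. Then x₀ is a discrete Bohr a.a. point of (T,X) if and only if x₀ ∈ P_aa(T,X). -/

import Mathlib

open Filter Topology Set Uniformity

universe u v w

section Core

variable {T : Type u} {X : Type v}

/-- `A ⊆ T` is (right) syndetic in `T`: there is a compact `K ⊆ T` with `Kt ∩ A ≠ ∅`
for every `t ∈ T`. -/
def Syndetic [Mul T] [TopologicalSpace T] (A : Set T) : Prop :=
  ∃ K : Set T, IsCompact K ∧ ∀ t : T, ∃ k ∈ K, k * t ∈ A

/-- `A ⊆ T` is discretely syndetic: there is a finite `K ⊆ T` with `Kt ∩ A ≠ ∅`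
for every `t ∈ T`. -/
def DiscSyndetic [Mul T] (A : Set T) : Prop :=
  ∃ K : Set T, K.Finite ∧ ∀ t : T, ∃ k ∈ K, k * t ∈ A

/-- `x` is an almost automorphic (a.a.) point for the action `act : T → X → X`:
for every net `{t_n}` in `T`, every `y, x' ∈ X` and every net `{x'_n}` in `X` with
`t_n x → y`, `x'_n → x'` and `t_n x'_n = y` for all `n`, one has `x = x'`. -/
def IsAAPointVia [TopologicalSpace X] (act : T → X → X) (x : X) : Prop :=
  ∀ (ι : Type w) [Preorder ι] [IsDirected ι (· ≤ ·)] [Nonempty ι]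
    (t : ι → T) (xn : ι → X) (y x' : X),
    Tendsto (fun n => act (t n) x) atTop (𝓝 y) →
    Tendsto xn atTop (𝓝 x') →
    (∀ n, act (t n) (xn n) = y) → x = x'

/-- `x` is proximal to `y`: there is a net `{t_n}` in `T` with `lim t_n x = lim t_n y`. -/
def ProximalVia [TopologicalSpace X] (act : T → X → X) (x y : X) : Prop :=
  ∃ (ι : Type w) (pι : Preorder ι),
    letI := pι
    IsDirected ι (· ≤ ·) ∧ Nonempty ι ∧
      ∃ (t : ι → T) (z : X),
        Tendsto (fun n => act (t n) x) atTop (𝓝 z) ∧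
        Tendsto (fun n => act (t n) y) atTop (𝓝 z)

/-- The orbit `Tx`. -/
def orbitVia (act : T → X → X) (x : X) : Set X := Set.range fun t => act t x

/-- `x` is a distal point: the only point of `cls(Tx)` proximal to `x` is `x` itself. -/
def DistalPtVia [TopologicalSpace X] (act : T → X → X) (x : X) : Prop :=
  ∀ y ∈ closure (orbitVia act x), ProximalVia.{u,v,w} act x y → y = x

/-- `x` is a locally almost periodic (l.a.p.) point. -/
def LapPtVia [Mul T] [TopologicalSpace T] [TopologicalSpace X] (act : T → X → X) (x : X) : Prop :=
  ∀ U ∈ 𝓝 x, ∃ V ∈ 𝓝 x, ∃ A : Set T, Syndetic A ∧ ∀ a ∈ A, ∀ v ∈ V, act a v ∈ U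

/-- `x` is regionally proximal to `x'`. -/
def RegProximalVia [TopologicalSpace X] (act : T → X → X) (x x' : X) : Prop :=
  ∃ (ι : Type w) (pι : Preorder ι),
    letI := pι
    IsDirected ι (· ≤ ·) ∧ Nonempty ι ∧
      ∃ (t : ι → T) (xn x'n : ι → X) (z : X),
        Tendsto xn atTop (𝓝 x) ∧ Tendsto x'n atTop (𝓝 x') ∧
        Tendsto (fun n => act (t n) (xn n)) atTop (𝓝 z) ∧
        Tendsto (fun n => act (t n) (x'n n)) atTop (𝓝 z)

/-- `(x,y) ∈ Q⁻`. -/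
def QMinusVia [TopologicalSpace X] (act : T → X → X) (x y : X) : Prop :=
  ∃ (ι : Type w) (pι : Preorder ι),
    letI := pι
    IsDirected ι (· ≤ ·) ∧ Nonempty ι ∧
      ∃ (t : ι → T) (xn yn : ι → X) (z : X),
        Tendsto xn atTop (𝓝 z) ∧ Tendsto yn atTop (𝓝 z) ∧
        Tendsto (fun n => act (t n) (xn n)) atTop (𝓝 x) ∧
        Tendsto (fun n => act (t n) (yn n)) atTop (𝓝 y)

/-- The semiflow is equicontinuous. -/
def EquicontSF [UniformSpace X] (act : T → X → X) : Prop :=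
  ∀ ε ∈ 𝓤 X, ∃ δ ∈ 𝓤 X, ∀ p : X × X, p ∈ δ → ∀ t : T, (act t p.1, act t p.2) ∈ ε

/-- The semiflow is almost periodic: for each entourage `ε` there is a syndetic `A ⊆ T`
with `Ax ⊆ ε[x]` for all `x`. -/
def APSF [Mul T] [TopologicalSpace T] [UniformSpace X] (act : T → X → X) : Prop :=
  ∀ ε ∈ 𝓤 X, ∃ A : Set T, Syndetic A ∧ ∀ a ∈ A, ∀ x : X, (x, act a x) ∈ ε

/-- The semiflow is minimal: every orbit is dense. -/
def MinimalSF [TopologicalSpace X] (act : T → X → X) : Prop :=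
  ∀ x : X, Dense (orbitVia act x)

/-- `T` is an almost right C-semigroup. -/
def AlmostRightC (T : Type*) [Mul T] [TopologicalSpace T] : Prop :=
  Dense {t : T | IsCompact (closure ((Set.range fun s : T => s * t)ᶜ))}

end Core

/-- The preimage maps of the semiflow are continuous (upper and lower semicontinuity of
`x ↦ t⁻¹[{x}]`). -/
def ContPreimagesVia {T : Type u} {X : Type v} [TopologicalSpace X] (act : T → X → X) : Prop :=
  ∀ t : T,
    (∀ (x : X) (U : Set X), IsOpen U → {z : X | act t z = x} ⊆ U →
      ∃ V ∈ 𝓝 x, ∀ y ∈ V, {z : X | act t z = y} ⊆ U) ∧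
    (∀ (x : X) (U : Set X), IsOpen U → (U ∩ {z : X | act t z = x}).Nonempty →
      ∃ V ∈ 𝓝 x, ∀ y ∈ V, (U ∩ {z : X | act t z = y}).Nonempty)

/-- `x` is a discrete Bohr a.a. point: for every entourage `ε` there is a discretely
syndetic `B ⊆ T` with `t₂⁻¹[{t₁ x}] ⊆ ε[x]` for all `t₁, t₂ ∈ B`. -/
def DiscBohrAAVia {T : Type u} {X : Type v} [UniformSpace X] (act : T → X → X)
    [Mul T] (x : X) : Prop :=
  ∀ ε ∈ 𝓤 X, ∃ B : Set T, DiscSyndetic B ∧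
    ∀ t₁ ∈ B, ∀ t₂ ∈ B, ∀ z : X, act t₂ z = act t₁ x → (x, z) ∈ ε


section BackwardHelpers

open Filter Topology Set Uniformity

universe u' v' w'

/-- Directed index type realizing convergence along an ultrafilter on `ℕ`. -/
private def UIdx (𝒰 : Ultrafilter ℕ) : Type :=
  {p : ℕ × Set ℕ // p.2 ∈ 𝒰 ∧ p.1 ∈ p.2}

private instance UIdx.preorder (𝒰 : Ultrafilter ℕ) : Preorder (UIdx 𝒰) where
  le a b := b.1.2 ⊆ a.1.2 ∧ b.1.1 ∈ a.1.2
  le_refl a := ⟨subset_rfl, a.2.2⟩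
  le_trans a b c hab hbc := ⟨hbc.1.trans hab.1, hab.1 hbc.2⟩

private instance UIdx.directed (𝒰 : Ultrafilter ℕ) : IsDirected (UIdx 𝒰) (· ≤ ·) := by
  constructor
  intro a b
  have hmem : a.1.2 ∩ b.1.2 ∈ 𝒰 := Filter.inter_mem a.2.1 b.2.1
  obtain ⟨n, hn⟩ := Filter.nonempty_of_mem hmem
  exact ⟨⟨(n, a.1.2 ∩ b.1.2), hmem, hn⟩,
    ⟨Set.inter_subset_left, hn.1⟩, ⟨Set.inter_subset_right, hn.2⟩⟩

private instance UIdx.nonempty (𝒰 : Ultrafilter ℕ) : Nonempty (UIdx 𝒰) :=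
  ⟨⟨(0, Set.univ), Filter.univ_mem, trivial⟩⟩

private def LUIdx (𝒰 : Ultrafilter ℕ) : Type w' := ULift.{w'} (UIdx 𝒰)

private instance LUIdx.preorder (𝒰 : Ultrafilter ℕ) : Preorder (LUIdx 𝒰) :=
  Preorder.lift ULift.down

private instance LUIdx.directed (𝒰 : Ultrafilter ℕ) : IsDirected (LUIdx 𝒰) (· ≤ ·) := by
  constructor
  intro a b
  obtain ⟨c, h1, h2⟩ := directed_of (α := UIdx 𝒰) (· ≤ ·) a.down b.down
  exact ⟨ULift.up c, h1, h2⟩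

private instance LUIdx.nonempty (𝒰 : Ultrafilter ℕ) : Nonempty (LUIdx 𝒰) :=
  ⟨ULift.up (Classical.arbitrary _)⟩

/-- Convergence along an ultrafilter yields convergence of the associated net. -/
private lemma tendsto_LUIdx {X : Type v'} [TopologicalSpace X] {𝒰 : Ultrafilter ℕ}
    (f : ℕ → X) (y : X) (hf : Filter.Tendsto f 𝒰 (𝓝 y)) :
    Filter.Tendsto (fun j : LUIdx.{w'} 𝒰 => f j.down.1.1) Filter.atTop (𝓝 y) := by
  intro S hS
  have hA : f ⁻¹' S ∈ 𝒰 := hf hS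
  obtain ⟨n₀, hn₀⟩ := Filter.nonempty_of_mem hA
  rw [Filter.mem_map]
  have : Set.Ici (ULift.up (⟨(n₀, f ⁻¹' S), hA, hn₀⟩ : UIdx 𝒰) : LUIdx 𝒰) ⊆
      (fun j : LUIdx 𝒰 => f j.down.1.1) ⁻¹' S := by
    intro j hj
    exact hj.2
  exact Filter.mem_of_superset (Filter.mem_iInf_of_mem _ (Filter.mem_principal_self _)) this

/-- Generic recursive-approximation combinator for dependent-choice constructions. -/
private noncomputable def approxAux {α : Type u'} (G : (ℕ → α) → ℕ → α) (d : α) :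
    ℕ → ℕ → α
  | 0 => fun _ => d
  | (m + 1) => fun k => if k = m then G (approxAux G d m) m else approxAux G d m k

private noncomputable def diagAux {α : Type u'} (G : (ℕ → α) → ℕ → α) (d : α) : ℕ → α :=
  fun m => approxAux G d (m + 1) m

private lemma approx_eq_diag {α : Type u'} (G : (ℕ → α) → ℕ → α) (d : α) :
    ∀ m k, k < m → approxAux G d m k = diagAux G d k := by
  intro m
  induction m with
  | zero => intro k hk; omega
  | succ m ih =>
    intro k hk
    rcases Nat.lt_succ_iff_lt_or_eq.mp hk with h | h
    · have : approxAux G d (m + 1) k = approxAux G d m k := by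
        show (if k = m then _ else approxAux G d m k) = approxAux G d m k
        rw [if_neg (by omega)]
      rw [this, ih k h]
    · subst h
      rfl

end BackwardHelpers


section BackwardMain

open Filter Topology Set Uniformity

/-- Master lemma: an a.a. point admits no sequence `σ` with the pairwise exact
far-preimage pattern `σ m • x₀ ∈ σ n '' D` (`n < m`) for a closed `D` avoiding `x₀`. -/
private lemma aa_master {T : Type u} {X : Type v} [Monoid T] [TopologicalSpace T] [UniformSpace X]
    [CompactSpace X] [T2Space X] [MulAction T X] [ContinuousSMul T X] {x₀ : X}
    (h : IsAAPointVia.{u, v, w} (fun (t : T) (z : X) => t • z) x₀)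
    (D : Set X) (hD : IsClosed D) (hx : x₀ ∉ D) (σ : ℕ → T)
    (hmem : ∀ n m : ℕ, n < m → σ m • x₀ ∈ (σ n • ·) '' D) : False := by
  classical
  set 𝒰 : Ultrafilter ℕ := Filter.hyperfilter ℕ with h𝒰
  have hy' : Filter.Tendsto (fun m => σ m • x₀) 𝒰
      (𝓝 (𝒰.map (fun m => σ m • x₀)).lim) := (𝒰.map (fun m => σ m • x₀)).le_nhds_lim
  set y : X := (𝒰.map (fun m => σ m • x₀)).lim with hydef
  have hKn : ∀ n : ℕ, y ∈ (σ n • ·) '' D := by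
    intro n
    have hcl : IsClosed ((σ n • ·) '' D) :=
      ((hD.isCompact).image (continuous_const_smul (σ n))).isClosed
    have hev : ∀ᶠ m in (𝒰 : Filter ℕ), σ m • x₀ ∈ (σ n • ·) '' D := by
      have hfin : {m : ℕ | ¬ n < m}.Finite := by
        apply (Set.finite_le_nat n).subset
        intro m hm
        simpa using Nat.not_lt.mp hm
      have hco : {m : ℕ | ¬ n < m}ᶜ ∈ (𝒰 : Filter ℕ) := by
        rw [h𝒰]
        exact hfin.compl_mem_hyperfilter
      filter_upwards [hco] with m hm
      exact hmem n m (by simpa using hm)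
    exact hcl.mem_of_tendsto hy' hev
  have hKn' : ∀ n : ℕ, ∃ z, z ∈ D ∧ σ n • z = y := by
    intro n
    obtain ⟨z, hz1, hz2⟩ := hKn n
    exact ⟨z, hz1, hz2⟩
  choose z hzD hz using hKn'
  have hzb' : Filter.Tendsto z 𝒰 (𝓝 (𝒰.map z).lim) := (𝒰.map z).le_nhds_lim
  set zb : X := (𝒰.map z).lim with hzbdef
  have hzbD : zb ∈ D := hD.mem_of_tendsto hzb' (Filter.Eventually.of_forall hzD)
  have hfinal : x₀ = zb :=
    h (LUIdx.{w} 𝒰) (fun j => σ j.down.1.1) (fun j => z j.down.1.1) y zb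
      (tendsto_LUIdx _ _ hy') (tendsto_LUIdx _ _ hzb') (fun j => hz _)
  rw [← hfinal] at hzbD
  exact hx hzbD

/-- Partial products over `[n, m)`. -/
private def pfAux {T : Type u} [Monoid T] (f : ℕ → T) (n : ℕ) : ℕ → T
  | 0 => 1
  | (m + 1) => if m + 1 ≤ n then 1 else pfAux f n m * f m

private lemma pfAux_of_le {T : Type u} [Monoid T] (f : ℕ → T) {n m : ℕ} (hm : m ≤ n) :
    pfAux f n m = 1 := by
  induction m with
  | zero => rfl
  | succ m ih =>
    show (if m + 1 ≤ n then 1 else pfAux f n m * f m) = 1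
    rw [if_pos hm]

private lemma pfAux_succ {T : Type u} [Monoid T] (f : ℕ → T) {n m : ℕ} (hm : n ≤ m) :
    pfAux f n (m + 1) = pfAux f n m * f m := by
  show (if m + 1 ≤ n then 1 else pfAux f n m * f m) = pfAux f n m * f m
  rw [if_neg (by omega)]

private lemma pfAux_congr {T : Type u} [Monoid T] (f g : ℕ → T) (n m : ℕ)
    (hfg : ∀ k, k < m → f k = g k) : pfAux f n m = pfAux g n m := by
  induction m with
  | zero => rfl
  | succ m ih =>
    show (if m + 1 ≤ n then 1 else pfAux f n m * f m)
        = (if m + 1 ≤ n then 1 else pfAux g n m * g m)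
    by_cases hc : m + 1 ≤ n
    · rw [if_pos hc, if_pos hc]
    · rw [if_neg hc, if_neg hc, ih (fun k hk => hfg k (by omega)), hfg m (by omega)]

private lemma pfAux_split {T : Type u} [Monoid T] (f : ℕ → T) {n m : ℕ} (hm : n ≤ m) :
    pfAux f 0 m = pfAux f 0 n * pfAux f n m := by
  induction m with
  | zero =>
    have : n = 0 := by omega
    subst this
    simp [pfAux]
  | succ m ih =>
    rcases Nat.lt_succ_iff_lt_or_eq.mp (Nat.lt_succ_of_le hm) with hlt | heq
    · have hnm : n ≤ m := by omega
      rw [pfAux_succ f (by omega), pfAux_succ f hnm, ih hnm, mul_assoc]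
    · subst heq
      rw [pfAux_of_le f (le_refl _), mul_one]

private lemma diag_eq {α : Type u} (G : (ℕ → α) → ℕ → α) (d : α) (m : ℕ) :
    diagAux G d m = G (approxAux G d m) m := by
  show (if m = m then G (approxAux G d m) m else approxAux G d m m) = _
  rw [if_pos rfl]

/-- Claim M: finitely many left translates bring every orbit point into any
neighborhood of `x₀`. -/
private lemma aa_claimM {T : Type u} {X : Type v} [Monoid T] [TopologicalSpace T] [UniformSpace X]
    [CompactSpace X] [T2Space X] [MulAction T X] [ContinuousSMul T X] {x₀ : X}
    (h : IsAAPointVia.{u, v, w} (fun (t : T) (z : X) => t • z) x₀)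
    (N : Set X) (hN : IsOpen N) (hxN : x₀ ∈ N) :
    ∃ K : Finset T, ∀ τ : T, ∃ k ∈ K, (k * τ) • x₀ ∈ N := by
  classical
  by_contra hc
  push_neg at hc
  choose A hA using hc
  set G : (ℕ → T) → ℕ → T :=
    fun f m => A ((Finset.range (m + 1)).image (fun n => pfAux f n m)) with hGdef
  set τ : ℕ → T := diagAux G 1 with hτdef
  have hcong : ∀ m n, pfAux (approxAux G 1 m) n m = pfAux τ n m := by
    intro m n
    exact pfAux_congr _ _ _ _ (fun k hk => approx_eq_diag G 1 m k hk)
  have hstep : ∀ m n, n ≤ m → (pfAux τ n m * τ m) • x₀ ∉ N := by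
    intro m n hnm
    have hτm : τ m = A ((Finset.range (m + 1)).image (fun i => pfAux (approxAux G 1 m) i m)) :=
      diag_eq G 1 m
    have hmem : pfAux (approxAux G 1 m) n m ∈
        (Finset.range (m + 1)).image (fun i => pfAux (approxAux G 1 m) i m) :=
      Finset.mem_image_of_mem _ (Finset.mem_range.mpr (by omega))
    have := hA _ _ hmem
    rw [← hτm] at this
    rwa [← hcong m n]
  have hmid : ∀ n m : ℕ, n < m → pfAux τ n m • x₀ ∉ N := by
    intro n m hnm
    obtain ⟨m', rfl⟩ : ∃ m', m = m' + 1 := ⟨m - 1, by omega⟩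
    rw [pfAux_succ τ (by omega)]
    exact hstep m' n (by omega)
  refine aa_master h Nᶜ hN.isClosed_compl (by simpa using hxN) (fun m => pfAux τ 0 m) ?_
  intro n m hnm
  refine ⟨pfAux τ n m • x₀, hmid n m hnm, ?_⟩
  show pfAux τ 0 n • (pfAux τ n m • x₀) = pfAux τ 0 m • x₀
  rw [← mul_smul, ← pfAux_split τ (le_of_lt hnm)]

end BackwardMain

/-- Let `(T,X)` be a surjective semiflow with continuous preimage maps. Then `x₀` is a
discrete Bohr a.a. point iff `x₀ ∈ P_aa(T,X)`. -/
theorem discrete_bohr_aa_iff_aa_point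
    {T : Type u} {X : Type v} [Monoid T] [TopologicalSpace T] [ContinuousMul T]
    [UniformSpace X] [CompactSpace X] [T2Space X] [Nonempty X]
    [MulAction T X] [ContinuousSMul T X]
    (hsurj : ∀ t : T, Function.Surjective fun z : X => t • z)
    (hcont : ContPreimagesVia fun (t : T) (z : X) => t • z)
    (x₀ : X) :
    DiscBohrAAVia (fun (t : T) (z : X) => t • z) x₀ ↔
      IsAAPointVia (fun (t : T) (z : X) => t • z) x₀ := by
  constructor
  · -- Discrete Bohr a.a. implies a.a.
    intro h ι _ _ _ t xn y x' h1' h2 h3'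
    have h1 : Tendsto (fun n => t n • x₀) atTop (𝓝 y) := h1'
    have h3 : ∀ n, t n • xn n = y := h3'
    -- Main step: (x₀, x') belongs to every entourage.
    have key : ∀ ε ∈ 𝓤 X, (x₀, x') ∈ ε := by
      intro ε hε
      obtain ⟨δ₂, ⟨hδ₂u, hδ₂c⟩, hδ₂ε⟩ := (uniformity_hasBasis_closed (α := X)).mem_iff.mp hε
      obtain ⟨δ₃, hδ₃u, hδ₃s, hδ₃c⟩ := comp_symm_mem_uniformity_sets hδ₂u
      obtain ⟨B, ⟨K, hKfin, hKsynd⟩, hpair⟩ := h δ₃ hδ₃u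
      choose k hkK hkB using fun n => hKsynd (t n)
      -- some κ ∈ K is a tag frequently
      have hfreq : ∃ κ ∈ K, ∃ᶠ n in (atTop : Filter ι), k n = κ := by
        by_contra hcon
        push_neg at hcon
        have hev : ∀ᶠ n in (atTop : Filter ι), ∀ κ ∈ K, k n ≠ κ := by
          rw [Filter.eventually_all_finite hKfin]
          intro κ hκ
          have h' := hcon κ hκ
          exact h'
        obtain ⟨n, hn⟩ := hev.exists
        exact hn (k n) (hkK n) rfl
      obtain ⟨κ, hκK, hκfreq⟩ := hfreq
      -- frequently, (x₀, xn n) ∈ δ₂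
      have hmem : ∃ᶠ n in (atTop : Filter ι), (x₀, xn n) ∈ δ₂ := by
        refine hκfreq.mono ?_
        intro n hn
        have hcls : xn n ∈ closure {z : X | (x₀, z) ∈ δ₃} := by
          rw [mem_closure_iff]
          intro U hUopen hUmem
          have hfib : (U ∩ {z : X | (κ * t n) • z = κ • y}).Nonempty := by
            refine ⟨xn n, hUmem, ?_⟩
            show (κ * t n) • xn n = κ • y
            rw [mul_smul, h3 n]
          obtain ⟨V, hV, hVall⟩ := (hcont (κ * t n)).2 (κ • y) U hUopen hfib
          have htend : Tendsto (fun m => κ • (t m • x₀)) atTop (𝓝 (κ • y)) :=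
            ((continuous_const_smul κ).tendsto y).comp h1
          have hevV : ∀ᶠ m in (atTop : Filter ι), κ • (t m • x₀) ∈ V :=
            htend.eventually_mem hV
          obtain ⟨m, hm_eq, hm_mem⟩ := (hκfreq.and_eventually hevV).exists
          obtain ⟨z, hzU, hz_eq⟩ := hVall _ hm_mem
          refine ⟨z, hzU, ?_⟩
          have hB1 : κ * t m ∈ B := by rw [← hm_eq]; exact hkB m
          have hB2 : κ * t n ∈ B := by rw [← hn]; exact hkB n
          refine hpair (κ * t m) hB1 (κ * t n) hB2 z ?_
          have hz_eq' : (κ * t n) • z = κ • (t m • x₀) := hz_eq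
          show (κ * t n) • z = (κ * t m) • x₀
          rw [hz_eq', mul_smul]
        obtain ⟨z, hz₁, hz₂⟩ := mem_closure_iff_nhds.mp hcls
          (UniformSpace.ball (xn n) δ₃) (UniformSpace.ball_mem_nhds _ hδ₃u)
        exact hδ₃c ⟨z, hz₂, hδ₃s.symm _ _ hz₁⟩
      have htendpair : Tendsto (fun n => ((x₀ : X), xn n)) atTop (𝓝 (x₀, x')) :=
        tendsto_const_nhds.prodMk_nhds h2
      exact hδ₂ε (hδ₂c.mem_of_frequently_of_tendsto hmem htendpair)
    -- conclude x₀ = x' from separation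
    have hx : x' ∈ closure ({x₀} : Set X) := by
      rw [mem_closure_iff_nhds]
      intro U hU
      obtain ⟨V, hV, hVsub⟩ := UniformSpace.mem_nhds_iff.mp hU
      refine ⟨x₀, hVsub ?_, rfl⟩
      have hVswap : Prod.swap ⁻¹' V ∈ 𝓤 X := tendsto_swap_uniformity hV
      exact key _ hVswap
    rw [closure_singleton] at hx
    exact (mem_singleton_iff.mp hx).symm
  · -- a.a. implies discrete Bohr a.a.
    intro h
    intro ε hε
    classical
    -- scales
    obtain ⟨ε₁, ⟨hε₁u, hε₁c⟩, hε₁ε⟩ := (uniformity_hasBasis_closed (α := X)).mem_iff.mp hε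
    obtain ⟨ε₂'', hε₂''u, hε₂''c⟩ := comp_mem_uniformity_sets hε₁u
    obtain ⟨ε₂, ⟨hε₂u, hε₂cl⟩, hε₂sub⟩ := (uniformity_hasBasis_closed (α := X)).mem_iff.mp hε₂''u
    set E1 : Set X := {z : X | (x₀, z) ∈ ε₁} with hE1def
    set E2 : Set X := {z : X | (x₀, z) ∈ ε₂} with hE2def
    set D : Set X := closure E1ᶜ with hDdef
    set Dp : Set X := closure E2ᶜ with hDpdef
    have hE1nhds : E1 ∈ 𝓝 x₀ := UniformSpace.ball_mem_nhds x₀ hε₁u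
    have hE2nhds : E2 ∈ 𝓝 x₀ := UniformSpace.ball_mem_nhds x₀ hε₂u
    have hx₀D : x₀ ∉ D := by
      intro hx
      rw [hDdef, mem_closure_iff] at hx
      obtain ⟨q, hq1, hq2⟩ :=
        hx (interior E1) isOpen_interior (mem_interior_iff_mem_nhds.mpr hE1nhds)
      exact hq2 (interior_subset hq1)
    have hx₀Dp : x₀ ∉ Dp := by
      intro hx
      rw [hDpdef, mem_closure_iff] at hx
      obtain ⟨q, hq1, hq2⟩ :=
        hx (interior E2) isOpen_interior (mem_interior_iff_mem_nhds.mpr hE2nhds)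
      exact hq2 (interior_subset hq1)
    have hDc : ∀ z : X, z ∉ D → (x₀, z) ∈ ε := by
      intro z hz
      have hzE : z ∈ E1 := by
        by_contra hzE
        exact hz (subset_closure hzE)
      exact hε₁ε hzE
    have hDDp : D ⊆ interior Dp := by
      have h1 : D ⊆ E2ᶜ := by
        intro w hw hwE2
        rw [hDdef, mem_closure_iff_nhds] at hw
        obtain ⟨q, hq1, hq2⟩ := hw _ (UniformSpace.ball_mem_nhds w hε₂u)
        exact hq2 (hε₂''c ⟨w, hε₂sub hwE2, hε₂sub hq1⟩)
      have h2 : E2ᶜ ⊆ interior Dp := by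
        apply interior_maximal subset_closure
        have hcl : IsClosed E2 := hε₂cl.preimage (Continuous.prodMk_right x₀)
        exact hcl.isOpen_compl
      exact h1.trans h2
    -- openness of translate images
    have himg : ∀ (t : T) (U : Set X), IsOpen U → IsOpen ((t • ·) '' U) := by
      intro t U hU
      rw [isOpen_iff_mem_nhds]
      rintro p ⟨q, hqU, hq⟩
      obtain ⟨V, hV, hVall⟩ := (hcont t).2 p U hU ⟨q, hqU, hq⟩
      filter_upwards [hV] with w hw
      obtain ⟨q', hq'U, hq'⟩ := hVall w hw
      exact ⟨q', hq'U, hq'⟩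
    set BB : Set X → Set T := fun V =>
      {t : T | t • x₀ ∈ V ∧ ∀ s : T, s • x₀ ∈ V → ∀ z : X, t • z = s • x₀ → z ∉ D} with hBBdef
    have main : ∃ (r : T) (V : Set X) (K : Finset T), ∀ τ : T, ∃ k ∈ K, r * (k * τ) ∈ BB V := by
      by_contra hfail
      push_neg at hfail
      -- the recursive step
      have step : ∀ (f : ℕ → T × T) (m : ℕ), ∃ p : T × T,
          ((if m = 0 then 1 else (f (m - 1)).2) • x₀ ∈
              ⋂ n ∈ Finset.range m, ((f n).1 • ·) '' interior Dp) →
          (p.1 • x₀ ∈ (⋂ n ∈ Finset.range m, ((f n).1 • ·) '' interior Dp) ∧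
           p.2 • x₀ ∈ (⋂ n ∈ Finset.range m, ((f n).1 • ·) '' interior Dp) ∧
           ∃ c ∈ D, p.1 • c = p.2 • x₀) := by
        intro f m
        set rr : T := if m = 0 then 1 else (f (m - 1)).2 with hrr
        set Vf : Set X := ⋂ n ∈ Finset.range m, ((f n).1 • ·) '' interior Dp with hVf
        by_cases hbase : rr • x₀ ∈ Vf
        · have hVopen : IsOpen Vf := by
            apply isOpen_biInter_finset
            intro n _
            exact himg _ _ isOpen_interior
          have hNopen : IsOpen ((rr • ·) ⁻¹' Vf) := hVopen.preimage (continuous_const_smul rr)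
          have hNx : x₀ ∈ (rr • ·) ⁻¹' Vf := hbase
          obtain ⟨K, hK⟩ := aa_claimM h _ hNopen hNx
          obtain ⟨τ, hτ⟩ := hfail rr Vf K
          obtain ⟨k₀, hk₀K, hk₀⟩ := hK τ
          have hσV : (rr * (k₀ * τ)) • x₀ ∈ Vf := by rw [mul_smul]; exact hk₀
          have hwit : ∃ (s : T) (z : X), s • x₀ ∈ Vf ∧ (rr * (k₀ * τ)) • z = s • x₀ ∧ z ∈ D := by
            by_contra hw
            push_neg at hw
            exact hτ k₀ hk₀K ⟨hσV, fun s hs z hz => hw s z hs hz⟩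
          obtain ⟨s, c, hsV, hsc, hcD⟩ := hwit
          exact ⟨(rr * (k₀ * τ), s), fun _ => ⟨hσV, hsV, c, hcD, hsc⟩⟩
        · exact ⟨(1, 1), fun hb => absurd hb hbase⟩
      choose G hG using step
      set F : ℕ → T × T := diagAux G (1, 1) with hF
      set Θ : ℕ → Set X := fun n => ((F n).1 • ·) '' interior Dp with hΘ
      have hsets : ∀ m,
          (⋂ n ∈ Finset.range m, ((approxAux G (1, 1) m n).1 • ·) '' interior Dp)
            = ⋂ n ∈ Finset.range m, Θ n := by
        intro m
        apply Set.iInter₂_congr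
        intro n hn
        rw [approx_eq_diag G (1, 1) m n (Finset.mem_range.mp hn)]
      have hbase_eq : ∀ m, (if m = 0 then (1 : T) else (approxAux G (1, 1) m (m - 1)).2)
          = (if m = 0 then 1 else (F (m - 1)).2) := by
        intro m
        by_cases hm : m = 0
        · rw [if_pos hm, if_pos hm]
        · rw [if_neg hm, if_neg hm, approx_eq_diag G (1, 1) m (m - 1) (by omega)]
      have hFm : ∀ m, F m = G (approxAux G (1, 1) m) m := fun m => diag_eq G (1, 1) m
      have stepF : ∀ m,
          ((if m = 0 then (1 : T) else (F (m - 1)).2) • x₀ ∈ ⋂ n ∈ Finset.range m, Θ n) →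
          ((F m).1 • x₀ ∈ (⋂ n ∈ Finset.range m, Θ n) ∧
           (F m).2 • x₀ ∈ (⋂ n ∈ Finset.range m, Θ n) ∧
           ∃ c ∈ D, (F m).1 • c = (F m).2 • x₀) := by
        intro m hb
        have hstep := hG (approxAux G (1, 1) m) m
        rw [hsets m, hbase_eq m, ← hFm m] at hstep
        exact hstep hb
      have hinv : ∀ m,
          (if m = 0 then (1 : T) else (F (m - 1)).2) • x₀ ∈ ⋂ n ∈ Finset.range m, Θ n := by
        intro m
        induction m with
        | zero => simp
        | succ m ih =>
          have h3 := stepF m ih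
          rw [if_neg (Nat.succ_ne_zero m)]
          simp only [Nat.add_sub_cancel]
          rw [Finset.range_add_one, Finset.set_biInter_insert]
          refine ⟨?_, h3.2.1⟩
          obtain ⟨c, hcD, hceq⟩ := h3.2.2
          exact ⟨c, hDDp hcD, hceq⟩
      have hpair : ∀ n m : ℕ, n < m → (F m).1 • x₀ ∈ ((F n).1 • ·) '' Dp := by
        intro n m hnm
        have h3 := (stepF m (hinv m)).1
        have hmem : (F m).1 • x₀ ∈ Θ n :=
          Set.mem_iInter₂.mp h3 n (Finset.mem_range.mpr hnm)
        exact (Set.image_mono interior_subset) hmem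
      exact aa_master h Dp isClosed_closure hx₀Dp (fun m => (F m).1) hpair
    obtain ⟨r, V, K, hmain⟩ := main
    refine ⟨{t : T | r * t ∈ BB V}, ⟨(K : Set T), K.finite_toSet, ?_⟩, ?_⟩
    · intro τ
      obtain ⟨k, hkK, hmem⟩ := hmain τ
      exact ⟨k, hkK, hmem⟩
    · intro t₁ ht₁ t₂ ht₂ z hz
      have hz' : t₂ • z = t₁ • x₀ := hz
      have h1 : (r * t₁) • x₀ ∈ V := ht₁.1
      have h2 : z ∉ D := by
        refine ht₂.2 (r * t₁) h1 z ?_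
        rw [mul_smul, hz', ← mul_smul]
      exact hDc z h2
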